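/- Suppose the assignment (y_1,…,y_n) ∈ {0,1}^n satisfies every clause c_1(x),…,c_m(x). Then the sequence consisting of ⌈log₂ m⌉ + 1 ones followed by y_1 y_2 … y_n occurs exactly m times among walks of G starting at root, i.e. occ_root^G(1^{⌈log₂ m⌉+1} y_1 … y_n) = m. -/

import Mathlib

namespace GraphDB

/-- Vertices of the graph `G` produced by the SAT reduction.
`node k p` is the vertex of the binary tree at depth `k` and position `p`
(in heap-style ordering); in particular `node 0 0` is the root and, with
`d = ⌈log₂ m⌉`, the leaf `node d (i-1)` is the clause vertex `c_i`.
`u i j` and `v i j` are the vertices `u_i^j` and `v_i^j` (with `i = 0`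
giving `u_0^j`, `v_0^j`). -/
inductive Vtx : Type
  | node (k p : ℕ)
  | u (i j : ℕ)
  | v (i j : ℕ)
  deriving DecidableEq

/-- The edge relation of the graph `G` obtained from the SAT instance with
`n` variables `x_1, …, x_n` and `m` clauses `c_1, …, c_m`, where
`c i j = some true` means that the literal `x_j` occurs in clause `c_i`,
`c i j = some false` means that the literal `¬x_j` occurs in `c_i`, and
`c i j = none` means that the variable `x_j` does not occur in `c_i`. -/
def Edge (n m : ℕ) (c : ℕ → ℕ → Option Bool) : Vtx → Vtx → Prop := fun a b =>
  match a, b with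
  | .node k p, .node k' q =>
      k' = k + 1 ∧ k' ≤ Nat.clog 2 m ∧ (q = 2 * p ∨ q = 2 * p + 1) ∧
        q * 2 ^ (Nat.clog 2 m - k') < m
  | .node k p, .u i j => k = Nat.clog 2 m ∧ p < m ∧ i = p + 1 ∧ j = 1
  | .node k p, .v i j => k = Nat.clog 2 m ∧ p < m ∧ i = p + 1 ∧ j = 1
  | .u i j, .u i' j' =>
      j' = j + 1 ∧
        ((i = 0 ∧ i' = 0 ∧ 2 ≤ j ∧ j + 1 ≤ n) ∨
         (1 ≤ i ∧ i ≤ m ∧ i' = 0 ∧ 1 ≤ j ∧ j + 1 ≤ n ∧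
            (c i j = some true ∨ (j + 1 = n ∧ c i n = some true))) ∨
         (1 ≤ i ∧ i ≤ m ∧ i' = i ∧ 1 ≤ j ∧ j + 2 ≤ n ∧ c i j ≠ some true))
  | .u i j, .v i' j' =>
      j' = j + 1 ∧
        ((i = 0 ∧ i' = 0 ∧ 2 ≤ j ∧ j + 1 ≤ n) ∨
         (1 ≤ i ∧ i ≤ m ∧ i' = 0 ∧ 1 ≤ j ∧ j + 1 ≤ n ∧
            (c i j = some true ∨ (j + 1 = n ∧ c i n = some false))) ∨
         (1 ≤ i ∧ i ≤ m ∧ i' = i ∧ 1 ≤ j ∧ j + 2 ≤ n ∧ c i j ≠ some true))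
  | .v i j, .u i' j' =>
      j' = j + 1 ∧
        ((i = 0 ∧ i' = 0 ∧ 2 ≤ j ∧ j + 1 ≤ n) ∨
         (1 ≤ i ∧ i ≤ m ∧ i' = 0 ∧ 1 ≤ j ∧ j + 1 ≤ n ∧
            (c i j = some false ∨ (j + 1 = n ∧ c i n = some true))) ∨
         (1 ≤ i ∧ i ≤ m ∧ i' = i ∧ 1 ≤ j ∧ j + 2 ≤ n ∧ c i j ≠ some false))
  | .v i j, .v i' j' =>
      j' = j + 1 ∧
        ((i = 0 ∧ i' = 0 ∧ 2 ≤ j ∧ j + 1 ≤ n) ∨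
         (1 ≤ i ∧ i ≤ m ∧ i' = 0 ∧ 1 ≤ j ∧ j + 1 ≤ n ∧
            (c i j = some false ∨ (j + 1 = n ∧ c i n = some false))) ∨
         (1 ≤ i ∧ i ≤ m ∧ i' = i ∧ 1 ≤ j ∧ j + 2 ≤ n ∧ c i j ≠ some false))
  | _, _ => False

/-- The vertex labeling `ℓ` of `G`: the vertices `v_i^j` are labeled `0`
(`false`), all other vertices are labeled `1` (`true`). -/
def lab : Vtx → Bool
  | .v _ _ => false
  | _ => true

/-- The starting vertex `root` of `G`. -/
def root : Vtx := .node 0 0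

/-- `occG n m c a t` is `occ_a^G(t)`: the number of walks `w_1 w_2 … w_k`
in `G` with `w_1 = a` and `ℓ(w_j) = t_j` for all `j ∈ {1, …, k}`. -/
noncomputable def occG (n m : ℕ) (c : ℕ → ℕ → Option Bool) (a : Vtx) (t : List Bool) : ℕ :=
  Set.ncard {w : List Vtx | List.Chain' (Edge n m c) w ∧ w.head? = some a ∧ w.map lab = t}

end GraphDB

namespace GraphDB

/-- State sequence: `tst c y n i k` is the subscript (0 or i) of the walk vertex at
level `k+1` of the gadget chain for clause `i` under assignment `y`. -/
def tst (c : ℕ → ℕ → Option Bool) (y : ℕ → Bool) (n i : ℕ) : ℕ → ℕ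
  | 0 => i
  | k + 1 => if n ≤ k + 2 ∨ c i (k + 1) = some (y (k + 1)) then 0 else tst c y n i k

/-- The vertex at level `j` with subscript `s` matching label `y j`. -/
def vtx (y : ℕ → Bool) (s j : ℕ) : Vtx := if y j then .u s j else .v s j

/-- The canonical walk through leaf `q` (clause `q+1`). -/
def W (n m : ℕ) (c : ℕ → ℕ → Option Bool) (y : ℕ → Bool) (q : ℕ) : List Vtx :=
  (List.range (Nat.clog 2 m + 1)).map (fun k => .node k (q / 2 ^ (Nat.clog 2 m - k)))
    ++ (List.range n).map (fun k => vtx y (tst c y n (q + 1) k) (k + 1))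

lemma lab_vtx (y : ℕ → Bool) (s j : ℕ) : lab (vtx y s j) = y j := by
  unfold vtx; cases h : y j <;> simp [h, lab]

lemma vtx_ne_node (y : ℕ → Bool) (s j k p : ℕ) : vtx y s j ≠ .node k p := by
  unfold vtx; split <;> simp

lemma length_W (n m : ℕ) (c : ℕ → ℕ → Option Bool) (y : ℕ → Bool) (q : ℕ) :
    (W n m c y q).length = Nat.clog 2 m + 1 + n := by simp [W]

lemma getElem_W_tree (n m : ℕ) (c : ℕ → ℕ → Option Bool) (y : ℕ → Bool) (q k : ℕ)
    (hk : k < Nat.clog 2 m + 1) :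
    (W n m c y q)[k]'(by rw [length_W]; omega) =
      Vtx.node k (q / 2 ^ (Nat.clog 2 m - k)) := by
  unfold W
  rw [List.getElem_append_left (by simpa using hk)]
  simp

lemma getElem_W_tail (n m : ℕ) (c : ℕ → ℕ → Option Bool) (y : ℕ → Bool) (q k : ℕ)
    (hk : k < n) :
    (W n m c y q)[Nat.clog 2 m + 1 + k]'(by rw [length_W]; omega) =
      vtx y (tst c y n (q + 1) k) (k + 1) := by
  unfold W
  rw [List.getElem_append_right (by simp)]
  simp

lemma tst_zero_succ (c : ℕ → ℕ → Option Bool) (y : ℕ → Bool) (n i k : ℕ)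
    (h : tst c y n i k = 0) : tst c y n i (k + 1) = 0 := by
  rw [tst]; split
  · rfl
  · exact h

lemma tst_eq (c : ℕ → ℕ → Option Bool) (y : ℕ → Bool) (n i : ℕ) :
    ∀ k, tst c y n i k ≠ 0 → tst c y n i k = i := by
  intro k
  induction k with
  | zero => intro _; rfl
  | succ k ih =>
    intro h
    rw [tst] at h ⊢
    by_cases hc : n ≤ k + 2 ∨ c i (k + 1) = some (y (k + 1))
    · rw [if_pos hc] at h; exact absurd rfl h
    · rw [if_neg hc] at h ⊢; exact ih h

lemma tst_spec (c : ℕ → ℕ → Option Bool) (y : ℕ → Bool) (n i : ℕ) (hi : i ≠ 0) :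
    ∀ k, tst c y n i k = i → ∀ j, 1 ≤ j → j ≤ k → c i j ≠ some (y j) := by
  intro k
  induction k with
  | zero => intro _ j h1 h2; omega
  | succ k ih =>
    intro h j h1 h2
    rw [tst] at h
    split at h
    · exact absurd h.symm hi
    · next hc =>
      push_neg at hc
      rcases Nat.lt_or_ge j (k + 1) with hj | hj
      · exact ih h j h1 (by omega)
      · have : j = k + 1 := by omega
        subst this
        exact hc.2

lemma tst_bound (c : ℕ → ℕ → Option Bool) (y : ℕ → Bool) (n i : ℕ) (hi : i ≠ 0) :
    ∀ k, 1 ≤ k → tst c y n i k = i → k + 2 ≤ n := by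
  intro k hk h
  obtain ⟨k, rfl⟩ : ∃ k', k = k' + 1 := ⟨k - 1, by omega⟩
  rw [tst] at h
  split at h
  · exact absurd h.symm hi
  · next hc => push_neg at hc; omega

lemma tail_edge (n m : ℕ) (c : ℕ → ℕ → Option Bool) (y : ℕ → Bool) (q : ℕ)
    (hq : q < m)
    (hsat : ∃ j, 1 ≤ j ∧ j ≤ n ∧ c (q + 1) j = some (y j))
    (k : ℕ) (hk : k + 2 ≤ n) :
    Edge n m c (vtx y (tst c y n (q + 1) k) (k + 1))
      (vtx y (tst c y n (q + 1) (k + 1)) (k + 2)) := by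
  set i := q + 1 with hi
  have hi1 : 1 ≤ i := by omega
  have him : i ≤ m := by omega
  have hi0 : i ≠ 0 := by omega
  by_cases h0 : tst c y n i k = 0
  · -- state 0 at level k+1, hence also at k+2, and k ≥ 1
    have hk1 : 1 ≤ k := by
      by_contra h
      have : k = 0 := by omega
      subst this
      rw [tst] at h0; omega
    have h0' := tst_zero_succ c y n i k h0
    rw [h0, h0']
    unfold vtx
    cases hy1 : y (k + 1) <;> cases hy2 : y (k + 2) <;>       exact ⟨rfl, Or.inl ⟨rfl, rfl, by omega, by omega⟩⟩
  · have hki : tst c y n i k = i := tst_eq c y n i k h0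
    have hsucc : tst c y n i (k + 1)
        = if n ≤ k + 2 ∨ c i (k + 1) = some (y (k + 1)) then 0 else i := by
      rw [tst]; split
      · rfl
      · exact hki
    by_cases hcond : n ≤ k + 2 ∨ c i (k + 1) = some (y (k + 1))
    · rw [hki, hsucc, if_pos hcond]
      have hmain : c i (k + 1) = some (y (k + 1)) ∨ (k + 2 = n ∧ c i n = some (y n)) := by
        by_cases hc1 : c i (k + 1) = some (y (k + 1))
        · exact Or.inl hc1
        · have hn' : n = k + 2 := by
            rcases hcond with h | h
            · omega
            · exact absurd h hc1
          obtain ⟨j0, hj1, hj2, hj3⟩ := hsat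
          have hprev := tst_spec c y n i hi0 k hki
          have : j0 = n := by
            by_contra hne
            rcases Nat.lt_or_ge j0 (k + 1) with h | h
            · exact hprev j0 hj1 (by omega) hj3
            · rcases Nat.eq_or_lt_of_le h with h' | h'
              · exact hc1 (by rw [h']; exact hj3)
              · omega
          exact Or.inr ⟨hn'.symm, by rw [← this]; exact hj3⟩
      unfold vtx
      cases hy1 : y (k + 1) <;> cases hy2 : y (k + 2) <;>         refine ⟨rfl, Or.inr (Or.inl ⟨hi1, him, rfl, by omega, by omega, ?_⟩)⟩ <;>
        · rcases hmain with h | ⟨h1, h2⟩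
          · exact Or.inl (by rw [← hy1]; exact h)
          · exact Or.inr ⟨by omega, by rw [show (k + 2 : ℕ) = n by omega] at hy2; rw [← hy2]; exact h2⟩
    · push_neg at hcond
      rw [hki, hsucc, if_neg (by push_neg; exact hcond)]
      obtain ⟨hc1, hc2⟩ := hcond
      unfold vtx
      cases hy1 : y (k + 1) <;> cases hy2 : y (k + 2) <;>         exact ⟨rfl, Or.inr (Or.inr ⟨hi1, him, rfl, by omega, by omega,
          by rw [← hy1]; exact hc2⟩)⟩

lemma edge_det (n m : ℕ) (c : ℕ → ℕ → Option Bool) (a b b' : Vtx)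
    (ha : ∀ k p, a ≠ .node k p)
    (h1 : Edge n m c a b) (h2 : Edge n m c a b') (hl : lab b = lab b') : b = b' := by
  cases a with
  | node k p => exact absurd rfl (ha k p)
  | u i j =>
    cases b with
    | node => exact h1.elim
    | u i1 j1 =>
      cases b' with
      | node => exact h2.elim
      | v i2 j2 => simp [lab] at hl
      | u i2 j2 =>
        obtain ⟨e0, h1d⟩ := h1
        obtain ⟨f0, h2d⟩ := h2
        subst e0 f0
        congr 1
        rcases h1d with ⟨e1, e2, e3, e4⟩ | ⟨e1, e2, e3, e4, e5, d1⟩ | ⟨e1, e2, e3, e4, e5, d1⟩ <;>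
          rcases h2d with ⟨f1, f2, f3, f4⟩ | ⟨f1, f2, f3, f4, f5, d2⟩ | ⟨f1, f2, f3, f4, f5, d2⟩ <;>
          first
            | omega
            | (rcases d1 with d1 | ⟨d1, -⟩ <;> first | exact absurd d1 d2 | omega)
            | (rcases d2 with d2 | ⟨d2, -⟩ <;> first | exact absurd d2 d1 | omega)
    | v i1 j1 =>
      cases b' with
      | node => exact h2.elim
      | u i2 j2 => simp [lab] at hl
      | v i2 j2 =>
        obtain ⟨e0, h1d⟩ := h1
        obtain ⟨f0, h2d⟩ := h2
        subst e0 f0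
        congr 1
        rcases h1d with ⟨e1, e2, e3, e4⟩ | ⟨e1, e2, e3, e4, e5, d1⟩ | ⟨e1, e2, e3, e4, e5, d1⟩ <;>
          rcases h2d with ⟨f1, f2, f3, f4⟩ | ⟨f1, f2, f3, f4, f5, d2⟩ | ⟨f1, f2, f3, f4, f5, d2⟩ <;>
          first
            | omega
            | (rcases d1 with d1 | ⟨d1, -⟩ <;> first | exact absurd d1 d2 | omega)
            | (rcases d2 with d2 | ⟨d2, -⟩ <;> first | exact absurd d2 d1 | omega)
  | v i j =>
    cases b with
    | node => exact h1.elim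
    | u i1 j1 =>
      cases b' with
      | node => exact h2.elim
      | v i2 j2 => simp [lab] at hl
      | u i2 j2 =>
        obtain ⟨e0, h1d⟩ := h1
        obtain ⟨f0, h2d⟩ := h2
        subst e0 f0
        congr 1
        rcases h1d with ⟨e1, e2, e3, e4⟩ | ⟨e1, e2, e3, e4, e5, d1⟩ | ⟨e1, e2, e3, e4, e5, d1⟩ <;>
          rcases h2d with ⟨f1, f2, f3, f4⟩ | ⟨f1, f2, f3, f4, f5, d2⟩ | ⟨f1, f2, f3, f4, f5, d2⟩ <;>
          first
            | omega
            | (rcases d1 with d1 | ⟨d1, -⟩ <;> first | exact absurd d1 d2 | omega)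
            | (rcases d2 with d2 | ⟨d2, -⟩ <;> first | exact absurd d2 d1 | omega)
    | v i1 j1 =>
      cases b' with
      | node => exact h2.elim
      | u i2 j2 => simp [lab] at hl
      | v i2 j2 =>
        obtain ⟨e0, h1d⟩ := h1
        obtain ⟨f0, h2d⟩ := h2
        subst e0 f0
        congr 1
        rcases h1d with ⟨e1, e2, e3, e4⟩ | ⟨e1, e2, e3, e4, e5, d1⟩ | ⟨e1, e2, e3, e4, e5, d1⟩ <;>
          rcases h2d with ⟨f1, f2, f3, f4⟩ | ⟨f1, f2, f3, f4, f5, d2⟩ | ⟨f1, f2, f3, f4, f5, d2⟩ <;>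
          first
            | omega
            | (rcases d1 with d1 | ⟨d1, -⟩ <;> first | exact absurd d1 d2 | omega)
            | (rcases d2 with d2 | ⟨d2, -⟩ <;> first | exact absurd d2 d1 | omega)

lemma W_head (n m : ℕ) (c : ℕ → ℕ → Option Bool) (y : ℕ → Bool) (q : ℕ) (hq : q < m) :
    (W n m c y q).head? = some root := by
  unfold W
  rw [List.range_succ_eq_map]
  simp only [List.map_cons, List.cons_append, List.head?_cons]
  rw [Nat.sub_zero, Nat.div_eq_of_lt (lt_of_lt_of_le hq (Nat.le_pow_clog one_lt_two m))]
  rfl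

lemma W_map (n m : ℕ) (c : ℕ → ℕ → Option Bool) (y : ℕ → Bool) (q : ℕ) :
    (W n m c y q).map lab
      = List.replicate (Nat.clog 2 m + 1) true ++ (List.range' 1 n).map y := by
  set d := Nat.clog 2 m with hd
  apply List.ext_getElem
  · simp [length_W, hd]
  · intro k h1 h2
    rw [List.getElem_map]
    rcases Nat.lt_or_ge k (d + 1) with hk | hk
    · rw [List.getElem_append_left (by simpa using hk), List.getElem_replicate,
        getElem_W_tree n m c y q k hk]
      rfl
    · have hkn : k - (d + 1) < n := by
        rw [List.length_map, length_W] at h1; omega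
      obtain ⟨k', rfl⟩ : ∃ k', k = d + 1 + k' := ⟨k - (d + 1), by omega⟩
      rw [List.getElem_append_right (by simpa using hk)]
      rw [getElem_W_tail n m c y q k' (by omega), lab_vtx]
      simp only [List.getElem_map, List.getElem_range', List.length_replicate]
      congr 1
      omega

lemma W_chain (n m : ℕ) (c : ℕ → ℕ → Option Bool) (y : ℕ → Bool) (q : ℕ)
    (hn : 2 ≤ n) (hq : q < m)
    (hsat : ∃ j, 1 ≤ j ∧ j ≤ n ∧ c (q + 1) j = some (y j)) :
    List.Chain' (Edge n m c) (W n m c y q) := by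
  unfold List.Chain'
  rw [List.isChain_iff_getElem]
  intro k hk
  rw [length_W] at hk
  rcases Nat.lt_or_ge (k + 1) (Nat.clog 2 m + 1) with h1 | h1
  · rw [getElem_W_tree n m c y q k (by omega), getElem_W_tree n m c y q (k + 1) h1]
    have hdd : q / 2 ^ (Nat.clog 2 m - k) = q / 2 ^ (Nat.clog 2 m - (k + 1)) / 2 := by
      rw [Nat.div_div_eq_div_mul, ← pow_succ]
      congr 2
      omega
    refine ⟨rfl, by omega, by omega, ?_⟩
    calc q / 2 ^ (Nat.clog 2 m - (k + 1)) * 2 ^ (Nat.clog 2 m - (k + 1)) ≤ q :=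
        Nat.div_mul_le_self _ _
      _ < m := hq
  · rcases Nat.eq_or_lt_of_le h1 with h2 | h2
    · have hkd : k = Nat.clog 2 m := by omega
      have e2 : (W n m c y q)[k + 1]'(by rw [length_W]; omega)
          = vtx y (tst c y n (q + 1) 0) 1 := by
        have h3 := getElem_W_tail n m c y q 0 (by omega)
        convert h3 using 2 <;> omega
      rw [getElem_W_tree n m c y q k (by omega), e2]
      rw [show Nat.clog 2 m - k = 0 by omega, pow_zero, Nat.div_one]
      show Edge n m c (.node k q) (vtx y (q + 1) 1)
      unfold vtx
      cases hy1 : y 1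
      · exact ⟨hkd, hq, rfl, rfl⟩
      · exact ⟨hkd, hq, rfl, rfl⟩
    · obtain ⟨k', rfl⟩ : ∃ k', k = Nat.clog 2 m + 1 + k' := ⟨k - (Nat.clog 2 m + 1), by omega⟩
      have e1 := getElem_W_tail n m c y q k' (by omega)
      have e2 : (W n m c y q)[Nat.clog 2 m + 1 + k' + 1]'(by rw [length_W]; omega)
          = vtx y (tst c y n (q + 1) (k' + 1)) (k' + 2) := by
        have h3 := getElem_W_tail n m c y q (k' + 1) (by omega)
        convert h3 using 2 <;> omega
      rw [e1, e2]
      exact tail_edge n m c y q hq hsat k' (by omega)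

end GraphDB

namespace GraphDB

/-- if the assignment `(y_1, …, y_n) ∈ {0,1}^n` satisfies every
clause `c_1(x), …, c_m(x)`, then the sequence `1^{⌈log₂ m⌉+1} y_1 y_2 … y_n`
occurs exactly `m` times among walks of `G` starting at `root`. -/
theorem occ_of_satisfying_assignment (n m : ℕ) (hn : 2 ≤ n) (hm : 1 ≤ m)
    (c : ℕ → ℕ → Option Bool)
    (hne : ∀ i, 1 ≤ i → i ≤ m → ∃ j, 1 ≤ j ∧ j ≤ n ∧ c i j ≠ none)
    (y : ℕ → Bool)
    (hy : ∀ i, 1 ≤ i → i ≤ m → ∃ j, 1 ≤ j ∧ j ≤ n ∧ c i j = some (y j)) :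
    occG n m c root
      (List.replicate (Nat.clog 2 m + 1) true ++ (List.range' 1 n).map y) = m := by
  classical
  have hset : {w : List Vtx | List.Chain' (Edge n m c) w ∧ w.head? = some root ∧
      w.map lab = List.replicate (Nat.clog 2 m + 1) true ++ (List.range' 1 n).map y}
      = (fun q => W n m c y q) '' (Set.Iio m) := by
    ext w
    simp only [Set.mem_setOf_eq, Set.mem_image, Set.mem_Iio]
    constructor
    · rintro ⟨hch, hhd, hmap⟩
      have hlen : w.length = Nat.clog 2 m + 1 + n := by
        have h := congrArg List.length hmap
        simpa using h
      have hne : w ≠ [] := by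
        intro h; rw [h] at hlen; simp at hlen; omega
      have h0 : w[0]'(by omega) = root := by
        obtain ⟨a, l, hw⟩ := List.exists_cons_of_ne_nil hne
        subst hw
        simpa using hhd
      have hlab1 : ∀ (k) (_ : k < Nat.clog 2 m + 1), lab (w[k]'(by omega)) = true := by
        intro k hk
        have h1 := List.getElem_of_eq hmap (show k < (w.map lab).length by
          rw [List.length_map, hlen]; omega)
        rw [List.getElem_map] at h1
        rw [h1, List.getElem_append_left (by simpa using hk), List.getElem_replicate]
      have hlab2 : ∀ (k) (_ : k < n),
          lab (w[Nat.clog 2 m + 1 + k]'(by omega)) = y (k + 1) := by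
        intro k hk
        have h1 := List.getElem_of_eq hmap
          (show Nat.clog 2 m + 1 + k < (w.map lab).length by
            rw [List.length_map, hlen]; omega)
        rw [List.getElem_map] at h1
        rw [h1, List.getElem_append_right (by simp)]
        simp only [List.length_replicate, List.getElem_map, List.getElem_range']
        congr 1
        omega
      have hchain : ∀ (k) (_ : k + 1 < w.length),
          Edge n m c (w[k]'(by omega)) (w[k + 1]'(by omega)) := by
        unfold List.Chain' at hch
        rw [List.isChain_iff_getElem] at hch
        intro k hk
        have h := hch k (by omega)
        simpa using h
      have hA : ∀ k, ∀ _ : k ≤ Nat.clog 2 m, ∃ p, w[k]'(by omega) = Vtx.node k p := by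
        intro k
        induction k with
        | zero => exact fun _ => ⟨0, h0⟩
        | succ k ih =>
          intro hk
          obtain ⟨p, hp⟩ := ih (by omega)
          have he := hchain k (by omega)
          rw [hp] at he
          have hl := hlab1 (k + 1) (by omega)
          rcases hg : w[k + 1]'(by omega) with ⟨k2, p2⟩ | ⟨i2, j2⟩ | ⟨i2, j2⟩
          · rw [hg] at he
            obtain ⟨hk2, -, -, -⟩ := he
            exact ⟨p2, by rw [hk2]⟩
          · rw [hg] at he
            exact absurd he.1 (by omega)
          · rw [hg] at hl
            simp [lab] at hl
      obtain ⟨q, hqd⟩ := hA (Nat.clog 2 m) le_rfl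
      have hkey : q < m ∧ w[Nat.clog 2 m + 1]'(by omega) = vtx y (q + 1) 1 := by
        have he := hchain (Nat.clog 2 m) (by omega)
        rw [hqd] at he
        have hl : lab (w[Nat.clog 2 m + 1]'(by omega)) = y 1 := by
          have h := hlab2 0 (by omega)
          simpa using h
        rcases hg : w[Nat.clog 2 m + 1]'(by omega) with ⟨k2, p2⟩ | ⟨i2, j2⟩ | ⟨i2, j2⟩
        · rw [hg] at he
          obtain ⟨ha1, ha2, -, -⟩ := he
          omega
        · rw [hg] at he
          obtain ⟨-, hqm, hi2, hj2⟩ := he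
          rw [hg] at hl
          simp only [lab] at hl
          refine ⟨hqm, ?_⟩
          rw [hi2, hj2]
          unfold vtx
          rw [if_pos hl.symm]
        · rw [hg] at he
          obtain ⟨-, hqm, hi2, hj2⟩ := he
          rw [hg] at hl
          simp only [lab] at hl
          refine ⟨hqm, ?_⟩
          rw [hi2, hj2]
          unfold vtx
          rw [if_neg (by rw [← hl]; simp)]
      have hB : ∀ k, k ≤ Nat.clog 2 m →
          w[Nat.clog 2 m - k]'(by omega) = Vtx.node (Nat.clog 2 m - k) (q / 2 ^ k) := by
        intro k
        induction k with
        | zero => intro _; simpa using hqd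
        | succ k ih =>
          intro hk
          have ih' := ih (by omega)
          obtain ⟨p, hp⟩ := hA (Nat.clog 2 m - (k + 1)) (by omega)
          have he' : Edge n m c (w[Nat.clog 2 m - (k + 1)]'(by omega))
              (w[Nat.clog 2 m - k]'(by omega)) := by
            have h := hchain (Nat.clog 2 m - (k + 1)) (by omega)
            convert h using 2 <;> omega
          rw [hp, ih'] at he'
          obtain ⟨-, -, h3, -⟩ := he'
          have hdd : q / 2 ^ (k + 1) = q / 2 ^ k / 2 := by
            rw [Nat.div_div_eq_div_mul, ← pow_succ]
          rw [hp]
          congr 1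
          omega
      have htree : ∀ (k) (hk : k ≤ Nat.clog 2 m),
          w[k]'(by omega) = Vtx.node k (q / 2 ^ (Nat.clog 2 m - k)) := by
        intro k hk
        have h1 := hB (Nat.clog 2 m - k) (by omega)
        convert h1 using 2 <;> omega
      have hC : ∀ k, ∀ _ : k < n,
          w[Nat.clog 2 m + 1 + k]'(by omega) = vtx y (tst c y n (q + 1) k) (k + 1) := by
        intro k
        induction k with
        | zero =>
          intro _
          rw [show tst c y n (q + 1) 0 = q + 1 from rfl]
          have h1 := hkey.2
          convert h1 using 2 <;> omega
        | succ k ih =>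
          intro hk1
          have ih' := ih (by omega)
          have he := hchain (Nat.clog 2 m + 1 + k) (by omega)
          rw [ih'] at he
          have hW := tail_edge n m c y q hkey.1 (hy (q + 1) (by omega) (by omega)) k (by omega)
          have hl := hlab2 (k + 1) (by omega)
          refine edge_det n m c (vtx y (tst c y n (q + 1) k) (k + 1)) _ _
            (fun k0 p0 => vtx_ne_node _ _ _ _ _) he hW ?_
          rw [lab_vtx]
          exact hl
      refine ⟨q, hkey.1, ?_⟩
      apply List.ext_getElem
      · rw [length_W, hlen]
      · intro k h1 h2
        rcases Nat.lt_or_ge k (Nat.clog 2 m + 1) with hk | hk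
        · rw [getElem_W_tree n m c y q k hk, htree k (by omega)]
        · obtain ⟨k', rfl⟩ : ∃ k', k = Nat.clog 2 m + 1 + k' :=
            ⟨k - (Nat.clog 2 m + 1), by omega⟩
          rw [getElem_W_tail n m c y q k' (by rw [length_W] at h1; omega),
            hC k' (by rw [length_W] at h1; omega)]
    · rintro ⟨q, hq, rfl⟩
      exact ⟨W_chain n m c y q hn hq (hy (q + 1) (by omega) (by omega)),
        W_head n m c y q hq, W_map n m c y q⟩
  have hinj : Set.InjOn (fun q => W n m c y q) (Set.Iio m) := by
    intro q1 _ q2 _ heq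
    simp only at heq
    have e1 : (W n m c y q1)[Nat.clog 2 m]? = some (Vtx.node (Nat.clog 2 m) q1) := by
      rw [List.getElem?_eq_getElem (by rw [length_W]; omega),
        getElem_W_tree n m c y q1 (Nat.clog 2 m) (by omega), Nat.sub_self, pow_zero,
        Nat.div_one]
    have e2 : (W n m c y q2)[Nat.clog 2 m]? = some (Vtx.node (Nat.clog 2 m) q2) := by
      rw [List.getElem?_eq_getElem (by rw [length_W]; omega),
        getElem_W_tree n m c y q2 (Nat.clog 2 m) (by omega), Nat.sub_self, pow_zero,
        Nat.div_one]
    rw [heq, e2] at e1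
    simp only [Option.some.injEq, Vtx.node.injEq] at e1
    exact e1.2.symm
  unfold occG
  rw [hset, Set.ncard_image_of_injOn hinj,
    show (Set.Iio m : Set ℕ) = ↑(Finset.Iio m) by simp, Set.ncard_coe_finset, Nat.card_Iio]

end GraphDB
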